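/- For any binary tree B, the path u(B) is weakly above the canopy path v(B). -/

import Mathlib

/-- A lattice path on the square grid starting at `(0,0)`:
`true` = north step `N`, `false` = east step `E`. -/
abbrev LPath := List Bool

/-- The x-coordinate of the rightmost point at height `y` lying weakly above `v`,
i.e. the number of east steps of `v` occurring at height at most `y`. -/
def horizAbs (v : LPath) (y : ℕ) : ℕ :=
  ((List.range v.length).filter
    (fun i => v.getD i true = false ∧ (v.take i).count true ≤ y)).length

/-- The horizontal distance `horiz_v(p)` of the point `p` of `u` reached after `j` steps:
the maximal number of east steps that can be appended at `p` without crossing `v`. -/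
def horiz (v u : LPath) (j : ℕ) : ℕ :=
  horizAbs v ((u.take j).count true) - (u.take j).count false

/-- `u` has the same endpoints as `v` (same numbers of north and east steps) and
stays weakly above `v`. -/
def WeaklyAbove (u v : LPath) : Prop :=
  u.count true = v.count true ∧ u.count false = v.count false ∧
  ∀ j : ℕ, (u.take j).count false ≤ horizAbs v ((u.take j).count true)

/-- The covering relation of `Tam(v)`: the point `p` of `u` after `j` steps is preceded
by an east step and followed by a north step, `k` is the index of the first point `p'`
after `p` with `horiz_v(p') = horiz_v(p)`, and `u'` is obtained from `u` by exchanging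
that east step with the subpath of `u` from `p` to `p'`. -/
def TamCovers (v u u' : LPath) : Prop :=
  ∃ j k : ℕ, 0 < j ∧ j < k ∧ k ≤ u.length ∧
    u.getD (j - 1) true = false ∧ u.getD j false = true ∧
    horiz v u k = horiz v u j ∧
    (∀ l : ℕ, j < l → l < k → horiz v u l ≠ horiz v u j) ∧
    u' = u.take (j - 1) ++ (u.drop j).take (k - j) ++ [false] ++ u.drop k

/-- The order of `Tam(v)`: the reflexive-transitive closure of the covering relation. -/
def TamLe (v : LPath) : LPath → LPath → Prop := Relation.ReflTransGen (TamCovers v)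

/-- The underlying set of `Tam(v)`: all paths weakly above `v` with the same endpoints. -/
abbrev TamSet (v : LPath) := {u : LPath // WeaklyAbove u v}

/-- Binary trees: either empty, or a root vertex with left and right binary subtrees. -/
inductive BTree where
  | nil : BTree
  | node : BTree → BTree → BTree
deriving DecidableEq

/-- The alphabet `{a, ā, b, b̄}`. -/
inductive Letter where
  | a : Letter
  | abar : Letter
  | b : Letter
  | bbar : Letter
deriving DecidableEq

/-- The word `w(B)` obtained by walking clockwise around `B` starting at the root,
writing `a` (resp. `ā`) at the first (resp. second) traversal of each left edge and
`b` (resp. `b̄`) at the first (resp. second) traversal of each right edge. -/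
def wordOf : BTree → List Letter
  | .nil => []
  | .node l r =>
      (if l = BTree.nil then [] else Letter.a :: (wordOf l ++ [Letter.abar])) ++
      (if r = BTree.nil then [] else Letter.b :: (wordOf r ++ [Letter.bbar]))

/-- The path `u(B)`: the subword of `w(B)` in the letters `{ā, b̄}`, with `ā` read as a
north step (`true`) and `b̄` as an east step (`false`). -/
def uPath (B : BTree) : LPath :=
  (wordOf B).filterMap fun x =>
    match x with
    | Letter.abar => some true
    | Letter.bbar => some false
    | _ => none

/-- The canopy `v(B)`: the subword of `w(B)` in the letters `{ā, b}`, with `ā` read as a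
north step (`true`) and `b` as an east step (`false`). -/
def vPath (B : BTree) : LPath :=
  (wordOf B).filterMap fun x =>
    match x with
    | Letter.abar => some true
    | Letter.b => some false
    | _ => none

/-- The number of vertices of a binary tree. -/
def bsize : BTree → ℕ
  | .nil => 0
  | .node l r => bsize l + bsize r + 1

def hA : LPath → ℕ → ℕ
  | [], _ => 0
  | true :: _, 0 => 0
  | true :: v, y+1 => hA v y
  | false :: v, y => hA v y + 1

theorem horizAbs_eq (v : LPath) (y : ℕ) : horizAbs v y = hA v y := by
  induction v generalizing y with
  | nil => simp [horizAbs, hA]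
  | cons c v ih =>
    rw [horizAbs, List.length_cons, List.range_succ_eq_map, List.filter_cons,
      List.filter_map]
    cases c with
    | true =>
      cases y with
      | zero =>
        have hcong : ∀ i ∈ List.range v.length,
            ((fun i => decide ((true :: v).getD i true = false ∧
              List.count true (List.take i (true :: v)) ≤ 0)) ∘ Nat.succ) i =
            (fun _ => false) i := by
          intro i _
          simp [List.take_succ_cons, List.count_cons, List.getD]
        rw [List.filter_congr hcong]
        simp [hA, List.getD]
      | succ y =>
        have hcong : ∀ i ∈ List.range v.length,
            ((fun i => decide ((true :: v).getD i true = false ∧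
              List.count true (List.take i (true :: v)) ≤ y + 1)) ∘ Nat.succ) i =
            (fun i => decide (v.getD i true = false ∧
              List.count true (List.take i v) ≤ y)) i := by
          intro i _
          simp [List.take_succ_cons, List.count_cons, List.getD, Nat.succ_le_succ_iff]
          by_cases hb : v[i]?.getD true = true <;> simp [hb]
        rw [List.filter_congr hcong]
        simp only [hA, ← ih y, horizAbs]
        simp [List.getD]
    | false =>
      have hcong : ∀ i ∈ List.range v.length,
          ((fun i => decide ((false :: v).getD i true = false ∧
            List.count true (List.take i (false :: v)) ≤ y)) ∘ Nat.succ) i =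
          (fun i => decide (v.getD i true = false ∧
            List.count true (List.take i v) ≤ y)) i := by
        intro i _
        simp [List.take_succ_cons, List.count_cons, List.getD]
        by_cases hb : v[i]?.getD true = true <;> simp [hb]
      rw [List.filter_congr hcong]
      simp only [hA, ← ih y, horizAbs]
      simp [List.getD]

theorem hA_mono (v : LPath) {y y' : ℕ} (h : y ≤ y') : hA v y ≤ hA v y' := by
  induction v generalizing y y' with
  | nil => simp [hA]
  | cons c v ih =>
    cases c with
    | true =>
      cases y with
      | zero => cases y' with
        | zero => simp [hA]
        | succ y' => simp [hA]
      | succ y => cases y' with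
        | zero => omega
        | succ y' => exact ih (by omega)
    | false => simpa [hA] using ih h

theorem hA_full (v : LPath) {y : ℕ} (h : v.count true ≤ y) : hA v y = v.count false := by
  induction v generalizing y with
  | nil => simp [hA]
  | cons c v ih =>
    cases c with
    | true =>
      cases y with
      | zero => simp [List.count_cons] at h
      | succ y =>
        simp [List.count_cons] at h ⊢
        simp only [hA]
        exact ih (by omega)
    | false =>
      simp [List.count_cons] at h ⊢
      simp only [hA]
      rw [ih (by omega)]

theorem hA_le_append (v1 v2 : LPath) (y : ℕ) : hA v1 y ≤ hA (v1 ++ v2) y := by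
  induction v1 generalizing y with
  | nil => simp [hA]
  | cons c v ih =>
    cases c with
    | true =>
      cases y with
      | zero => simp [hA]
      | succ y => simpa [hA] using ih y
    | false => simpa [hA] using ih y

theorem hA_append_full (v1 v2 : LPath) (t : ℕ) :
    hA (v1 ++ v2) (v1.count true + t) = v1.count false + hA v2 t := by
  induction v1 generalizing t with
  | nil => simp
  | cons c v ih =>
    cases c with
    | true =>
      have : (true :: v).count true + t = (v.count true + t) + 1 := by
        simp [List.count_cons]; omega
      rw [this]
      show hA (v ++ v2) (v.count true + t) = _
      rw [ih]
      simp [List.count_cons]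
    | false =>
      have h1 : (false :: v).count true = v.count true := by simp [List.count_cons]
      rw [h1]
      show hA (v ++ v2) (v.count true + t) + 1 = _
      rw [ih]
      simp [List.count_cons]
      omega

theorem WA_nil : WeaklyAbove [] [] := by
  refine ⟨rfl, rfl, fun j => ?_⟩
  simp

theorem WA_append {u1 v1 u2 v2 : LPath} (h1 : WeaklyAbove u1 v1)
    (h2 : WeaklyAbove u2 v2) : WeaklyAbove (u1 ++ u2) (v1 ++ v2) := by
  obtain ⟨ht1, hf1, hp1⟩ := h1
  obtain ⟨ht2, hf2, hp2⟩ := h2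
  refine ⟨by simp [List.count_append, ht1, ht2],
    by simp [List.count_append, hf1, hf2], fun j => ?_⟩
  rw [List.take_append, List.count_append, List.count_append,
    horizAbs_eq]
  by_cases hj : j ≤ u1.length
  · have hz : j - u1.length = 0 := by omega
    rw [hz]
    simp only [List.take_zero, List.count_nil, Nat.add_zero]
    calc (u1.take j).count false ≤ hA v1 ((u1.take j).count true) := by
            rw [← horizAbs_eq]; exact hp1 j
      _ ≤ hA (v1 ++ v2) ((u1.take j).count true) := hA_le_append _ _ _
  · have hu1 : u1.take j = u1 := List.take_of_length_le (by omega)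
    rw [hu1, ht1, hf1, hA_append_full]
    have := hp2 (j - u1.length)
    rw [horizAbs_eq] at this
    omega

theorem WA_snocN {A V : LPath} (h : WeaklyAbove A V) :
    WeaklyAbove (A ++ [true]) (V ++ [true]) := by
  obtain ⟨ht, hf, hp⟩ := h
  refine ⟨by simp [List.count_append, ht], by simp [List.count_append, hf],
    fun j => ?_⟩
  rw [List.take_append, List.count_append, List.count_append,
    horizAbs_eq]
  have hcf : (([true] : LPath).take (j - A.length)).count false = 0 := by
    cases Nat.eq_zero_or_pos (j - A.length) with
    | inl h => rw [h]; simp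
    | inr h => rw [List.take_of_length_le (by simp; omega)]; simp
  rw [hcf, Nat.add_zero]
  calc (A.take j).count false ≤ hA V ((A.take j).count true) := by
        rw [← horizAbs_eq]; exact hp j
    _ ≤ hA (V ++ [true]) ((A.take j).count true) := hA_le_append _ _ _
    _ ≤ hA (V ++ [true]) ((A.take j).count true + (([true] : LPath).take (j - A.length)).count true) :=
        hA_mono _ (by omega)

theorem WA_consE {B V : LPath} (h : WeaklyAbove B V) :
    WeaklyAbove (B ++ [false]) (false :: V) := by
  obtain ⟨ht, hf, hp⟩ := h
  refine ⟨by simp [List.count_append, List.count_cons, ht],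
    by simp [List.count_append, List.count_cons, hf], fun j => ?_⟩
  rw [List.take_append, List.count_append, List.count_append,
    horizAbs_eq]
  have hct : (([false] : LPath).take (j - B.length)).count true = 0 := by
    cases Nat.eq_zero_or_pos (j - B.length) with
    | inl h => rw [h]; simp
    | inr h => rw [List.take_of_length_le (by simp; omega)]; simp
  have hcf : (([false] : LPath).take (j - B.length)).count false ≤ 1 := by
    calc _ ≤ (([false] : LPath).take (j - B.length)).length := List.count_le_length
      _ ≤ 1 := by simp [List.length_take]
  rw [hct, Nat.add_zero]
  show _ ≤ hA V _ + 1
  have := hp j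
  rw [horizAbs_eq] at this
  omega

theorem wordOf_node (l r : BTree) : wordOf (.node l r) =
    (if l = BTree.nil then [] else Letter.a :: (wordOf l ++ [Letter.abar])) ++
    (if r = BTree.nil then [] else Letter.b :: (wordOf r ++ [Letter.bbar])) := by
  rw [wordOf]

theorem uPath_node (l r : BTree) : uPath (.node l r) =
    (if l = BTree.nil then [] else uPath l ++ [true]) ++
    (if r = BTree.nil then [] else uPath r ++ [false]) := by
  simp only [uPath, wordOf_node]
  split_ifs <;> simp [List.filterMap_append, uPath]

theorem vPath_node (l r : BTree) : vPath (.node l r) =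
    (if l = BTree.nil then [] else vPath l ++ [true]) ++
    (if r = BTree.nil then [] else false :: vPath r) := by
  simp only [vPath, wordOf_node]
  split_ifs <;> simp [List.filterMap_append, vPath]

/-- **Lemma 4.** For any binary tree `B`, the path `u(B)` is weakly above the
canopy `v(B)` (in particular they have the same endpoints). -/
theorem u_weakly_above_canopy (B : BTree) : WeaklyAbove (uPath B) (vPath B) := by
  induction B with
  | nil =>
    have hu : uPath BTree.nil = [] := rfl
    have hv : vPath BTree.nil = [] := rfl
    rw [hu, hv]; exact WA_nil
  | node l r ihl ihr =>
    rw [uPath_node, vPath_node]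
    refine WA_append ?_ ?_
    · by_cases hl : l = BTree.nil
      · simp only [hl, if_pos rfl]; exact WA_nil
      · simp only [if_neg hl]; exact WA_snocN ihl
    · by_cases hr : r = BTree.nil
      · simp only [hr, if_pos rfl]; exact WA_nil
      · simp only [if_neg hr]; exact WA_consE ihr
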